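/- (Comparison Lemma for continued fractions) Let n ≥ 1 and let x̃ = (x_1,…,x_n) and ỹ = (y_1,…,y_n) be tuples of positive integers with x_k ≥ y_k for every k = 1,…,n. Then the Gauss measure of the corresponding cylinders satisfies μ(I(x_1,…,x_n)) ≤ μ(I(y_1,…,y_n)). -/

import Mathlib

open MeasureTheory Filter

/-- The Gauss map `T(x) = 1/x mod 1`. -/
noncomputable def gaussMap (x : ℝ) : ℝ := Int.fract (1 / x)

/-- The `n`-th partial quotient (indexed from `0`): `a_{n+1}(ω) = ⌊1 / T^n(ω)⌋`. -/
noncomputable def cfDigit (n : ℕ) (ω : ℝ) : ℕ := ⌊1 / (gaussMap^[n] ω)⌋₊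

/-- The Gauss measure on `(0,1)`, with density `1/((log 2)(1+t))` w.r.t. Lebesgue. -/
noncomputable def gaussMeasure : Measure ℝ :=
  (volume.restrict (Set.Ioo (0 : ℝ) 1)).withDensity
    (fun t => ENNReal.ofReal (1 / (Real.log 2 * (1 + t))))

/-- The cylinder `I(a_1, …, a_n)`: irrationals in `(0,1)` whose continued fraction
expansion begins with `a_1, …, a_n`. -/
def cylinder (n : ℕ) (a : Fin n → ℕ) : Set ℝ :=
  {ω | ω ∈ Set.Ioo (0 : ℝ) 1 ∧ Irrational ω ∧ ∀ i : Fin n, cfDigit i ω = a i}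

namespace CFComp


/-- step of the continuant recursion -/
def step (a : ℕ) (pr : ℕ × ℕ) : ℕ × ℕ := (pr.2, a * pr.2 + pr.1)

def cA (l : List ℕ) : ℕ × ℕ := l.foldr step (0, 1)
def cB (l : List ℕ) : ℕ × ℕ := l.foldr step (1, 0)

def pA (l : List ℕ) : ℕ := (cA l).1
def qA (l : List ℕ) : ℕ := (cA l).2
def pB (l : List ℕ) : ℕ := (cB l).1
def qB (l : List ℕ) : ℕ := (cB l).2

@[simp] lemma pA_nil : pA [] = 0 := rfl
@[simp] lemma qA_nil : qA [] = 1 := rfl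
@[simp] lemma pB_nil : pB [] = 1 := rfl
@[simp] lemma qB_nil : qB [] = 0 := rfl
@[simp] lemma pA_cons (a : ℕ) (l : List ℕ) : pA (a :: l) = qA l := rfl
@[simp] lemma qA_cons (a : ℕ) (l : List ℕ) : qA (a :: l) = a * qA l + pA l := rfl
@[simp] lemma pB_cons (a : ℕ) (l : List ℕ) : pB (a :: l) = qB l := rfl
@[simp] lemma qB_cons (a : ℕ) (l : List ℕ) : qB (a :: l) = a * qB l + pB l := rfl

lemma one_le_qA (l : List ℕ) (hl : ∀ x ∈ l, 1 ≤ x) : 1 ≤ qA l := by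
  induction l with
  | nil => simp
  | cons a l ih =>
    have ha : 1 ≤ a := hl a (by simp)
    have := ih (fun x hx => hl x (by simp [hx]))
    simp only [qA_cons]
    nlinarith

lemma pA_le_qA (l : List ℕ) (hl : ∀ x ∈ l, 1 ≤ x) : pA l ≤ qA l := by
  induction l with
  | nil => simp
  | cons a l ih =>
    have ha : 1 ≤ a := hl a (by simp)
    have := ih (fun x hx => hl x (by simp [hx]))
    simp only [pA_cons, qA_cons]
    nlinarith
lemma sum_le (l : List ℕ) (hl : ∀ x ∈ l, 1 ≤ x) : pA l + pB l ≤ qA l + qB l := by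
  induction l with
  | nil => simp
  | cons a l ih =>
    have ha : 1 ≤ a := hl a (by simp)
    have := ih (fun x hx => hl x (by simp [hx]))
    simp only [pA_cons, qA_cons, pB_cons, qB_cons]
    nlinarith

lemma det_eq (l : List ℕ) :
    (pA l : ℤ) * qB l - qA l * pB l = (-1) ^ (l.length + 1) := by
  induction l with
  | nil => simp
  | cons a l ih =>
    simp only [pA_cons, qA_cons, pB_cons, qB_cons, List.length_cons]
    push_cast
    ring_nf
    ring_nf at ih
    linarith [ih]

/-- monotonicity -/
lemma mono (l m : List ℕ) (h : List.Forall₂ (· ≤ ·) l m) :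
    pA l ≤ pA m ∧ qA l ≤ qA m ∧ pB l ≤ pB m ∧ qB l ≤ qB m := by
  induction h with
  | nil => simp
  | cons hab hlm ih =>
    obtain ⟨h1, h2, h3, h4⟩ := ih
    refine ⟨?_, ?_, ?_, ?_⟩ <;> simp <;> nlinarith



noncomputable def gaussMap (x : ℝ) : ℝ := Int.fract (1 / x)
noncomputable def cfDigit (n : ℕ) (ω : ℝ) : ℕ := ⌊1 / (gaussMap^[n] ω)⌋₊

def goodSet : Set ℝ := {t | t ∈ Set.Ioo (0:ℝ) 1 ∧ Irrational t}

lemma goodSet_gaussMap {ω : ℝ} (h : ω ∈ goodSet) : gaussMap ω ∈ goodSet := by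
  obtain ⟨⟨h0, h1⟩, hirr⟩ := h
  have hinv : Irrational (1 / ω) := by simpa [one_div] using hirr.inv
  have hfr : Irrational (gaussMap ω) := by
    unfold gaussMap Int.fract; exact hinv.sub_intCast _
  refine ⟨⟨?_, ?_⟩, hfr⟩
  · rcases lt_or_eq_of_le (Int.fract_nonneg (1/ω)) with h | h
    · exact h
    · exfalso
      apply hfr
      refine ⟨0, ?_⟩
      simpa [gaussMap] using h
  · exact Int.fract_lt_one _

lemma one_lt_inv_of_good {ω : ℝ} (h : ω ∈ goodSet) : 1 < 1 / ω := by
  obtain ⟨⟨h0, h1⟩, _⟩ := h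
  rw [lt_div_iff₀ h0]; linarith

/-- For ω in goodSet with first digit a, ω = 1/(a + T ω) and a ≥ 1. -/
lemma digit_decomp {ω : ℝ} (h : ω ∈ goodSet) :
    1 ≤ cfDigit 0 ω ∧ ω = 1 / ((cfDigit 0 ω : ℝ) + gaussMap ω) := by
  have h1 : 1 < 1 / ω := one_lt_inv_of_good h
  have h0 : (0:ℝ) < ω := h.1.1
  have hfloor : ((⌊ω⁻¹⌋₊ : ℕ) : ℝ) = ((⌊ω⁻¹⌋ : ℤ) : ℝ) := by
    exact_mod_cast congrArg (Int.cast : ℤ → ℝ)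
      (Int.natCast_floor_eq_floor (by positivity : (0:ℝ) ≤ ω⁻¹))
  constructor
  · simpa [cfDigit] using (Nat.one_le_floor_iff _).mpr (le_of_lt h1)
  · have : (cfDigit 0 ω : ℝ) + gaussMap ω = 1 / ω := by
      simp only [cfDigit, Function.iterate_zero, id, gaussMap, Int.fract, one_div]
      rw [hfloor]; ring
    rw [this]; field_simp

/-- ψ_a(t) = 1/(a+t) lands in goodSet with digit a and Gauss image t. -/
lemma psi_mem {a : ℕ} (ha : 1 ≤ a) {t : ℝ} (ht : t ∈ goodSet) :
    (1 / ((a:ℝ) + t)) ∈ goodSet ∧ cfDigit 0 (1 / ((a:ℝ) + t)) = a ∧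
      gaussMap (1 / ((a:ℝ) + t)) = t := by
  obtain ⟨⟨t0, t1⟩, tirr⟩ := ht
  have hat : (1:ℝ) < (a:ℝ) + t := by
    have : (1:ℝ) ≤ (a:ℝ) := by exact_mod_cast ha
    linarith
  have hpos : (0:ℝ) < (a:ℝ) + t := by linarith
  have hinv : 1 / (1 / ((a:ℝ) + t)) = (a:ℝ) + t := by field_simp
  have hmem : (1 / ((a:ℝ) + t)) ∈ goodSet := by
    refine ⟨⟨by positivity, ?_⟩, ?_⟩
    · rw [div_lt_one hpos]; linarith
    · have : Irrational ((a:ℝ) + t) := tirr.natCast_add a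
      simpa [one_div] using this.inv
  refine ⟨hmem, ?_, ?_⟩
  · simp only [cfDigit, Function.iterate_zero, id, hinv]
    rw [Nat.floor_eq_iff (by positivity)]
    refine ⟨by push_cast; linarith, by push_cast; linarith⟩
  · simp only [gaussMap, hinv]
    rw [Int.fract]
    have : ⌊(a:ℝ) + t⌋ = a := by
      rw [Int.floor_eq_iff]
      refine ⟨by push_cast; linarith, by push_cast; linarith⟩
    rw [this]; push_cast; ring

lemma cfDigit_succ (n : ℕ) (ω : ℝ) : cfDigit (n+1) ω = cfDigit n (gaussMap ω) := by
  simp [cfDigit, Function.iterate_succ_apply]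

noncomputable def hom (l : List ℕ) (t : ℝ) : ℝ := l.foldr (fun a s => 1/((a:ℝ) + s)) t

@[simp] lemma hom_nil (t : ℝ) : hom [] t = t := rfl
@[simp] lemma hom_cons (a : ℕ) (l : List ℕ) (t : ℝ) :
    hom (a :: l) t = 1 / ((a:ℝ) + hom l t) := rfl

def cylL (l : List ℕ) : Set ℝ :=
  {ω | ω ∈ goodSet ∧ ∀ i, i < l.length → cfDigit i ω = l.getD i 0}

lemma cylL_nil : cylL [] = goodSet := by
  ext ω; simp [cylL]

lemma cylL_cons {a : ℕ} (ha : 1 ≤ a) (l : List ℕ) :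
    cylL (a :: l) = (fun t => 1 / ((a:ℝ) + t)) '' cylL l := by
  ext ω
  constructor
  · rintro ⟨hg, hd⟩
    have h0 : cfDigit 0 ω = a := by simpa using hd 0 (by simp)
    obtain ⟨-, hdec⟩ := digit_decomp hg
    refine ⟨gaussMap ω, ⟨goodSet_gaussMap hg, ?_⟩, ?_⟩
    · intro i hi
      have := hd (i+1) (by simpa using Nat.succ_lt_succ hi)
      rw [cfDigit_succ] at this
      simpa using this
    · rw [← h0]; exact hdec.symm
  · rintro ⟨t, ⟨htg, htd⟩, rfl⟩
    obtain ⟨hmem, hdig, hgm⟩ := psi_mem ha htg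
    refine ⟨hmem, ?_⟩
    intro i hi
    match i with
    | 0 => simpa using hdig
    | (i+1) =>
      rw [cfDigit_succ, hgm]
      have := htd i (by simpa using hi)
      simpa using this

lemma cylL_eq_image (l : List ℕ) (hl : ∀ x ∈ l, 1 ≤ x) :
    cylL l = hom l '' goodSet := by
  induction l with
  | nil => simp [cylL_nil, show hom [] = id from rfl]
  | cons a l ih =>
    rw [cylL_cons (hl a (by simp)) l, ih (fun x hx => hl x (by simp [hx]))]
    rw [← Set.image_comp]
    rfl


lemma homEq (l : List ℕ) (hl : ∀ x ∈ l, 1 ≤ x) (t : ℝ) (ht : 0 ≤ t) :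
    0 < (qA l : ℝ) + qB l * t ∧ 0 ≤ hom l t ∧
      hom l t = ((pA l : ℝ) + pB l * t) / ((qA l : ℝ) + qB l * t) := by
  induction l with
  | nil => simp [ht]
  | cons a l ih =>
    have ha : 1 ≤ a := hl a (by simp)
    obtain ⟨hden, hnn, heq⟩ := ih (fun x hx => hl x (by simp [hx]))
    have ha' : (1:ℝ) ≤ (a:ℝ) := by exact_mod_cast ha
    have hpos : 0 < (a:ℝ) + hom l t := by linarith
    have hden2 : 0 < ((qA (a::l) : ℝ) + qB (a::l) * t) := by
      simp only [qA_cons, qB_cons]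
      push_cast
      have : ((a:ℝ) * qA l + pA l) + ((a:ℝ) * qB l + pB l) * t
          = (a:ℝ) * ((qA l:ℝ) + qB l * t) + ((pA l:ℝ) + pB l * t) := by ring
      rw [this]
      have hnum : 0 ≤ (pA l:ℝ) + pB l * t := by positivity
      nlinarith
    refine ⟨hden2, ?_, ?_⟩
    · simp only [hom_cons]; positivity
    · simp only [hom_cons, heq, pA_cons, qA_cons, pB_cons, qB_cons]
      push_cast
      have hpos' : (a:ℝ) + ((pA l:ℝ) + pB l * t) / ((qA l:ℝ) + qB l * t) ≠ 0 := by
        rw [← heq]; exact ne_of_gt hpos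
      rw [add_div' _ _ _ (ne_of_gt hden), one_div_div]
      congr 1
      ring

lemma mem_Ioo_minmax_iff {a b ω : ℝ} (hab : a ≠ b) :
    ω ∈ Set.Ioo (min a b) (max a b) ↔ (ω - a) * (ω - b) < 0 := by
  rcases lt_or_gt_of_ne hab with h | h
  · rw [min_eq_left h.le, max_eq_right h.le]
    constructor
    · rintro ⟨h1, h2⟩; nlinarith
    · intro hm; constructor <;> nlinarith
  · rw [min_eq_right h.le, max_eq_left h.le]
    constructor
    · rintro ⟨h1, h2⟩; nlinarith
    · intro hm; constructor <;> nlinarith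

noncomputable def ptA (l : List ℕ) : ℝ := (pA l : ℝ) / (qA l : ℝ)
noncomputable def ptB (l : List ℕ) : ℝ := ((pA l : ℝ) + pB l) / ((qA l : ℝ) + qB l)

lemma image_eq (l : List ℕ) (hl : ∀ x ∈ l, 1 ≤ x) :
    hom l '' goodSet
      = {ω | ω ∈ Set.Ioo (min (ptA l) (ptB l)) (max (ptA l) (ptB l)) ∧ Irrational ω} := by
  set P : ℝ := (pA l : ℝ) with hPdef
  set Q : ℝ := (qA l : ℝ) with hQdef
  set P' : ℝ := (pB l : ℝ) with hP'def
  set Q' : ℝ := (qB l : ℝ) with hQ'def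
  set d : ℝ := (-1 : ℝ) ^ (l.length + 1) with hddef
  have hd : d = 1 ∨ d = -1 := neg_one_pow_eq_or ℝ _
  clear_value P Q P' Q' d
  have hd2 : d ^ 2 = 1 := by rcases hd with h | h <;> rw [h] <;> norm_num
  have hd0 : d ≠ 0 := by rcases hd with h | h <;> rw [h] <;> norm_num
  have hdet : P * Q' - Q * P' = d := by
    have := det_eq l
    rw [hddef, hPdef, hQdef, hP'def, hQ'def]
    exact_mod_cast this
  have hQ1 : (1 : ℝ) ≤ Q := by rw [hQdef]; exact_mod_cast one_le_qA l hl
  have hQ0 : (0 : ℝ) < Q := by linarith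
  have hQ'0 : (0 : ℝ) ≤ Q' := by rw [hQ'def]; positivity
  have hP0 : (0 : ℝ) ≤ P := by rw [hPdef]; positivity
  have hP'0 : (0 : ℝ) ≤ P' := by rw [hP'def]; positivity
  have hQQ' : (0 : ℝ) < Q + Q' := by linarith
  have hptA : ptA l * Q = P := by
    rw [ptA, ← hPdef, ← hQdef]; field_simp
  have hptB : ptB l * (Q + Q') = P + P' := by
    rw [ptB, ← hPdef, ← hQdef, ← hP'def, ← hQ'def]
    rw [div_mul_cancel₀ _ (ne_of_gt hQQ')]
  have hABdiff : (ptA l - ptB l) * (Q * (Q + Q')) = d := by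
    linear_combination (Q + Q') * hptA - Q * hptB + hdet
  have hABne : ptA l ≠ ptB l := by
    intro h
    rw [h, sub_self, zero_mul] at hABdiff
    exact hd0 hABdiff.symm
  ext ω
  simp only [Set.mem_image, Set.mem_setOf_eq]
  rw [mem_Ioo_minmax_iff hABne]
  constructor
  · rintro ⟨t, ⟨⟨t0, t1⟩, tirr⟩, rfl⟩
    obtain ⟨hden, hnn, heq⟩ := homEq l hl t t0.le
    simp only [← hPdef, ← hQdef, ← hP'def, ← hQ'def] at hden heq
    set x := hom l t with hxdef
    clear_value x
    have hx' : x * (Q + Q' * t) = P + P' * t := by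
      rw [heq]; exact div_mul_cancel₀ _ (ne_of_gt hden)
    have hxA : (x - ptA l) * (Q * (Q + Q' * t)) = -t * d := by
      linear_combination Q * hx' - (Q + Q' * t) * hptA - t * hdet
    have hxB : (x - ptB l) * ((Q + Q') * (Q + Q' * t)) = (1 - t) * d := by
      linear_combination (Q + Q') * hx' - (Q + Q' * t) * hptB + (1 - t) * hdet
    have hxirr : Irrational x := by
      intro hmem'
      obtain ⟨r, hr⟩ := hmem'
      have keyD : (Q' * x - P') * (Q + Q' * t) = d := by
        linear_combination Q' * hx' + hdet
      have hDne : Q' * x - P' ≠ 0 := by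
        intro h0; rw [h0, zero_mul] at keyD; exact hd0 keyD.symm
      have key2 : t * (Q' * x - P') = P - Q * x := by linear_combination hx'
      have ht' : t = (P - Q * x) / (Q' * x - P') := by
        rw [eq_div_iff hDne]; linear_combination key2
      apply tirr
      refine ⟨((pA l - qA l * r) / (qB l * r - pB l) : ℚ), ?_⟩
      rw [ht', ← hr]
      push_cast
      rw [← hPdef, ← hQdef, ← hP'def, ← hQ'def]
    refine ⟨?_, hxirr⟩
    have h1 : (0:ℝ) < Q * (Q + Q' * t) := mul_pos hQ0 hden
    have h2 : (0:ℝ) < (Q + Q') * (Q + Q' * t) := mul_pos hQQ' hden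
    have hprod2 : ((x - ptA l) * (Q * (Q + Q' * t))) * ((x - ptB l) * ((Q + Q') * (Q + Q' * t)))
        = -(t * (1 - t)) := by
      linear_combination ((x - ptB l) * ((Q + Q') * (Q + Q' * t))) * hxA
        + (-(t * d)) * hxB + (-(t * (1 - t))) * hd2
    by_contra hcon
    push_neg at hcon
    have h3 : 0 ≤ ((x - ptA l) * (x - ptB l)) * ((Q * (Q + Q' * t)) * ((Q + Q') * (Q + Q' * t))) :=
      mul_nonneg hcon (mul_pos h1 h2).le
    have h4 : ((x - ptA l) * (Q * (Q + Q' * t))) * ((x - ptB l) * ((Q + Q') * (Q + Q' * t)))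
        = ((x - ptA l) * (x - ptB l)) * ((Q * (Q + Q' * t)) * ((Q + Q') * (Q + Q' * t))) := by
      ring
    have h5 : 0 < t * (1 - t) := mul_pos t0 (by linarith)
    linarith [hprod2, h4 ▸ hprod2]
  · rintro ⟨hmem, hirr⟩
    set D : ℝ := Q' * ω - P' with hDdef
    clear_value D
    have h6 : (d * (ptA l - ptB l)) * (Q * (Q + Q')) = 1 := by
      linear_combination d * hABdiff + hd2
    have hdAB : 0 < d * (ptA l - ptB l) := by
      by_contra hcon
      push_neg at hcon
      have h7 : (d * (ptA l - ptB l)) * (Q * (Q + Q')) ≤ 0 :=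
        mul_nonpos_iff.mpr (Or.inr ⟨hcon, (mul_pos hQ0 hQQ').le⟩)
      linarith [h6]
    have hdA : 0 < d * (ptA l - ω) := by
      by_contra h
      push_neg at h
      have h8 : 0 ≤ (d * (ω - ptA l)) * (d * (ω - ptB l)) := by
        apply mul_nonneg (by linarith) (by linarith [hdAB, h])
      have h9 : (d * (ω - ptA l)) * (d * (ω - ptB l)) = (ω - ptA l) * (ω - ptB l) := by
        linear_combination ((ω - ptA l) * (ω - ptB l)) * hd2
      linarith [hmem, h8, h9]
    have hdB : 0 < d * (ω - ptB l) := by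
      by_contra h
      push_neg at h
      have h8 : 0 ≤ (d * (ptA l - ω)) * (d * (ptB l - ω)) := by
        apply mul_nonneg (by linarith [hdAB, h]) (by linarith)
      have h9 : (d * (ptA l - ω)) * (d * (ptB l - ω)) = (ω - ptA l) * (ω - ptB l) := by
        linear_combination ((ω - ptA l) * (ω - ptB l)) * hd2
      linarith [hmem, h8, h9]
    have hQ'B : (Q' * ptB l - P') * (Q + Q') = d := by
      linear_combination Q' * hptB + hdet
    have hdD : 0 < d * D := by
      have h5 : (d * D) * (Q + Q') = 1 + Q' * (d * (ω - ptB l)) * (Q + Q') := by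
        rw [hDdef]
        linear_combination d * hQ'B + hd2
      have hX : 0 ≤ Q' * (d * (ω - ptB l)) * (Q + Q') :=
        mul_nonneg (mul_nonneg hQ'0 hdB.le) hQQ'.le
      have h7 : 0 < (d * D) * (Q + Q') := by rw [h5]; linarith
      by_contra hcon
      push_neg at hcon
      have h8 : (d * D) * (Q + Q') ≤ 0 := mul_nonpos_iff.mpr (Or.inr ⟨hcon, hQQ'.le⟩)
      linarith
    have hD0 : D ≠ 0 := by
      intro h0; rw [h0, mul_zero] at hdD; exact lt_irrefl 0 hdD
    set t : ℝ := (P - Q * ω) / D with htdef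
    clear_value t
    have hkey : t * D = P - Q * ω := by
      rw [htdef]; exact div_mul_cancel₀ _ hD0
    have ht0 : 0 < t := by
      have hnum' : d * (P - Q * ω) = Q * (d * (ptA l - ω)) := by
        linear_combination -d * hptA
      have hnum : 0 < d * (P - Q * ω) := by
        rw [hnum']; exact mul_pos hQ0 hdA
      have : t = (d * (P - Q * ω)) / (d * D) := by
        rw [htdef, mul_div_mul_left _ _ hd0]
      rw [this]; positivity
    have ht1 : t < 1 := by
      have hnum' : d * ((Q + Q') * ω - (P + P')) = (Q + Q') * (d * (ω - ptB l)) := by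
        linear_combination d * hptB
      have hnum : 0 < d * ((Q + Q') * ω - (P + P')) := by
        rw [hnum']; exact mul_pos hQQ' hdB
      have h1t : (1 - t) * (d * D) = d * ((Q + Q') * ω - (P + P')) := by
        linear_combination (-d) * hkey + d * hDdef
      by_contra hcon
      push_neg at hcon
      have h8 : (1 - t) * (d * D) ≤ 0 :=
        mul_nonpos_iff.mpr (Or.inr ⟨by linarith, hdD.le⟩)
      linarith
    obtain ⟨hden, hnn, heq⟩ := homEq l hl t ht0.le
    simp only [← hPdef, ← hQdef, ← hP'def, ← hQ'def] at hden heq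
    have hhom : hom l t = ω := by
      rw [heq, div_eq_iff (ne_of_gt hden)]
      linear_combination (-1 : ℝ) * hkey + t * hDdef
    have htirr : Irrational t := by
      intro hmem'
      obtain ⟨r, hr⟩ := hmem'
      apply hirr
      refine ⟨((pA l + pB l * r) / (qA l + qB l * r) : ℚ), ?_⟩
      rw [← hhom, heq, ← hr]
      push_cast
      rw [← hPdef, ← hQdef, ← hP'def, ← hQ'def]
    exact ⟨t, ⟨⟨ht0, ht1⟩, htirr⟩, hhom⟩

lemma gaussMeasure_countable_null {s : Set ℝ} (hs : s.Countable) : gaussMeasure s = 0 := by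
  have h1 : (volume.restrict (Set.Ioo (0:ℝ) 1)) s = 0 := by
    apply le_antisymm _ zero_le
    calc (volume.restrict (Set.Ioo (0:ℝ) 1)) s ≤ volume s := Measure.restrict_le_self s
      _ = 0 := hs.measure_zero volume
  exact (withDensity_absolutelyContinuous _ _) h1

lemma gaussMeasure_inter_irrational (u v : ℝ) :
    gaussMeasure {ω | ω ∈ Set.Ioo u v ∧ Irrational ω} = gaussMeasure (Set.Ioo u v) := by
  have hset : {ω | ω ∈ Set.Ioo u v ∧ Irrational ω}
      = Set.Ioo u v \ {ω : ℝ | ¬ Irrational ω} := by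
    ext ω; simp [Set.mem_diff]
  rw [hset]
  apply measure_diff_null
  apply gaussMeasure_countable_null
  have : {ω : ℝ | ¬ Irrational ω} = Set.range ((↑) : ℚ → ℝ) := by
    ext ω; simp [Irrational]
  rw [this]
  exact Set.countable_range _

lemma gaussMeasure_Ioo {u v : ℝ} (h0 : 0 ≤ u) (huv : u ≤ v) (h1 : v ≤ 1) :
    gaussMeasure (Set.Ioo u v)
      = ENNReal.ofReal (Real.log ((1 + v) / (1 + u)) / Real.log 2) := by
  have hlog2 : 0 < Real.log 2 := Real.log_pos one_lt_two
  rw [gaussMeasure, withDensity_apply _ measurableSet_Ioo,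
    Measure.restrict_restrict measurableSet_Ioo,
    Set.inter_eq_left.mpr (Set.Ioo_subset_Ioo h0 h1)]
  have hInt : IntegrableOn (fun t : ℝ => 1 / (Real.log 2 * (1 + t))) (Set.Ioo u v) := by
    apply IntegrableOn.mono_set _ Set.Ioo_subset_Icc_self
    apply ContinuousOn.integrableOn_Icc
    apply ContinuousOn.div continuousOn_const
    · exact (continuous_const.mul (continuous_const.add continuous_id)).continuousOn
    · intro t ht
      have : 0 ≤ t := le_trans h0 ht.1
      have : 0 < 1 + t := by linarith
      positivity
  rw [← MeasureTheory.ofReal_integral_eq_lintegral_ofReal hInt]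
  · congr 1
    rw [← MeasureTheory.integral_Ioc_eq_integral_Ioo,
      ← intervalIntegral.integral_of_le huv]
    have heq : ∀ t ∈ Set.uIcc u v, (fun t : ℝ => 1 / (Real.log 2 * (1 + t))) t
        = (Real.log 2)⁻¹ * (fun s : ℝ => s⁻¹) (1 + t) := by
      intro t ht; simp [one_div, mul_inv, mul_comm]
    rw [intervalIntegral.integral_congr heq, intervalIntegral.integral_const_mul,
      intervalIntegral.integral_comp_add_left (fun s : ℝ => s⁻¹) 1,
      integral_inv_of_pos (by linarith) (by linarith)]
    rw [div_eq_inv_mul, div_eq_inv_mul]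
  · apply (ae_restrict_iff' measurableSet_Ioo).mpr
    apply ae_of_all
    intro t ht
    have h1t : 0 < 1 + t := by have := le_trans h0 ht.1.le; linarith
    positivity

def Eval (l : List ℕ) : ℕ :=
  if Odd l.length then qA l * (qA l + pA l + qB l + pB l)
  else (qA l + qB l) * (qA l + pA l)

lemma one_le_Eval (l : List ℕ) (hl : ∀ x ∈ l, 1 ≤ x) : 1 ≤ Eval l := by
  have h1 := one_le_qA l hl
  rw [Eval]
  split <;> [exact Nat.one_le_iff_ne_zero.mpr (by positivity);
    exact Nat.one_le_iff_ne_zero.mpr (by positivity)]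

lemma Eval_mono (l m : List ℕ) (h : List.Forall₂ (· ≤ ·) l m) : Eval l ≤ Eval m := by
  obtain ⟨h1, h2, h3, h4⟩ := mono l m h
  have hlen : l.length = m.length := h.length_eq
  rw [Eval, Eval, hlen]
  split
  · exact Nat.mul_le_mul h2 (by omega)
  · exact Nat.mul_le_mul (by omega) (by omega)

lemma ratio_eq (l : List ℕ) (hl : ∀ x ∈ l, 1 ≤ x) :
    (1 + max (ptA l) (ptB l)) / (1 + min (ptA l) (ptB l)) = 1 + 1 / (Eval l : ℝ) := by
  set P : ℝ := (pA l : ℝ) with hPdef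
  set Q : ℝ := (qA l : ℝ) with hQdef
  set P' : ℝ := (pB l : ℝ) with hP'def
  set Q' : ℝ := (qB l : ℝ) with hQ'def
  have hQ1 : (1 : ℝ) ≤ Q := by rw [hQdef]; exact_mod_cast one_le_qA l hl
  have hQ0 : (0 : ℝ) < Q := by linarith
  have hQ'0 : (0 : ℝ) ≤ Q' := by rw [hQ'def]; positivity
  have hP0 : (0 : ℝ) ≤ P := by rw [hPdef]; positivity
  have hP'0 : (0 : ℝ) ≤ P' := by rw [hP'def]; positivity
  have hQQ' : (0 : ℝ) < Q + Q' := by linarith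
  have hS0 : (0 : ℝ) < Q + P + Q' + P' := by linarith
  have hptA : ptA l * Q = P := by
    rw [ptA, ← hPdef, ← hQdef]; exact div_mul_cancel₀ _ (ne_of_gt hQ0)
  have hptB : ptB l * (Q + Q') = P + P' := by
    rw [ptB, ← hPdef, ← hQdef, ← hP'def, ← hQ'def]
    exact div_mul_cancel₀ _ (ne_of_gt hQQ')
  have h1A : 1 + ptA l = (Q + P) / Q := by
    rw [eq_div_iff (ne_of_gt hQ0)]; linear_combination hptA
  have h1B : 1 + ptB l = (Q + P + Q' + P') / (Q + Q') := by
    rw [eq_div_iff (ne_of_gt hQQ')]; linear_combination hptB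
  have hdet : P * Q' - Q * P' = (-1 : ℝ) ^ (l.length + 1) := by
    rw [hPdef, hQdef, hP'def, hQ'def]
    exact_mod_cast det_eq l
  have hABdiff : (ptA l - ptB l) * (Q * (Q + Q')) = (-1 : ℝ) ^ (l.length + 1) := by
    linear_combination (Q + Q') * hptA - Q * hptB + hdet
  rcases Nat.even_or_odd l.length with hpar | hpar
  · -- length even: d = -1, ptA < ptB
    have hd1 : ((-1 : ℝ)) ^ (l.length + 1) = -1 := (hpar.add_one).neg_one_pow
    rw [hd1] at hdet hABdiff
    have hlt : ptA l < ptB l := by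
      by_contra hcon
      push_neg at hcon
      have : 0 ≤ (ptA l - ptB l) * (Q * (Q + Q')) :=
        mul_nonneg (by linarith) (mul_pos hQ0 hQQ').le
      linarith [hABdiff]
    rw [max_eq_right hlt.le, min_eq_left hlt.le]
    have hEval : ((Eval l : ℕ) : ℝ) = (Q + Q') * (Q + P) := by
      rw [Eval, if_neg (by simpa using hpar)]
      push_cast
      simp only [← hPdef, ← hQdef, ← hP'def, ← hQ'def]
      try ring
    have key : (Q + P + Q' + P') * Q = (Q + Q') * (Q + P) + 1 := by
      linear_combination -hdet
    rw [h1A, h1B, div_div_div_eq]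
    rw [hEval, key]
    rw [add_div, div_self (by positivity : ((Q + Q') * (Q + P) : ℝ) ≠ 0)]
  · -- length odd: d = 1, ptB < ptA
    have hd1 : ((-1 : ℝ)) ^ (l.length + 1) = 1 := (hpar.add_one).neg_one_pow
    rw [hd1] at hdet hABdiff
    have hlt : ptB l < ptA l := by
      by_contra hcon
      push_neg at hcon
      have : (ptA l - ptB l) * (Q * (Q + Q')) ≤ 0 :=
        mul_nonpos_iff.mpr (Or.inr ⟨by linarith, (mul_pos hQ0 hQQ').le⟩)
      linarith [hABdiff]
    rw [max_eq_left hlt.le, min_eq_right hlt.le]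
    have hEval : ((Eval l : ℕ) : ℝ) = Q * (Q + P + Q' + P') := by
      rw [Eval, if_pos (by simpa using hpar)]
      push_cast
      simp only [← hPdef, ← hQdef, ← hP'def, ← hQ'def]
      try ring
    have key : (Q + P) * (Q + Q') = Q * (Q + P + Q' + P') + 1 := by
      linear_combination hdet
    rw [h1A, h1B, div_div_div_eq]
    rw [hEval, key]
    rw [add_div, div_self (by positivity : (Q * (Q + P + Q' + P') : ℝ) ≠ 0)]

lemma ptA_nonneg (l : List ℕ) : 0 ≤ ptA l := by
  rw [ptA]; positivity

lemma ptA_le_one (l : List ℕ) (hl : ∀ x ∈ l, 1 ≤ x) : ptA l ≤ 1 := by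
  rw [ptA]
  apply div_le_one_of_le₀
  · exact_mod_cast pA_le_qA l hl
  · positivity

lemma ptB_nonneg (l : List ℕ) : 0 ≤ ptB l := by
  rw [ptB]; positivity

lemma ptB_le_one (l : List ℕ) (hl : ∀ x ∈ l, 1 ≤ x) : ptB l ≤ 1 := by
  rw [ptB]
  apply div_le_one_of_le₀
  · exact_mod_cast sum_le l hl
  · positivity

lemma cylinder_eq (n : ℕ) (a : Fin n → ℕ) : _root_.cylinder n a = cylL (List.ofFn a) := by
  ext ω
  simp only [_root_.cylinder, cylL, goodSet, Set.mem_setOf_eq, List.length_ofFn]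
  constructor
  · rintro ⟨h1, h2, h3⟩
    refine ⟨⟨h1, h2⟩, fun i hi => ?_⟩
    rw [List.getD_eq_getElem _ _ (by simpa using hi)]
    have h' : cfDigit i ω = a ⟨i, hi⟩ := h3 ⟨i, hi⟩
    simpa using h'
  · rintro ⟨⟨h1, h2⟩, h3⟩
    refine ⟨h1, h2, fun i => ?_⟩
    have := h3 i i.isLt
    rw [List.getD_eq_getElem _ _ (by simpa using i.isLt)] at this
    simp at this; exact this

/-- The Gauss measure of a cylinder, in closed form. -/
lemma gaussMeasure_cylL (l : List ℕ) (hl : ∀ x ∈ l, 1 ≤ x) :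
    gaussMeasure (cylL l)
      = ENNReal.ofReal (Real.log (1 + 1 / (Eval l : ℝ)) / Real.log 2) := by
  have h0 : (0:ℝ) ≤ min (ptA l) (ptB l) :=
    le_min (ptA_nonneg l) (ptB_nonneg l)
  have h1 : max (ptA l) (ptB l) ≤ 1 :=
    max_le (ptA_le_one l hl) (ptB_le_one l hl)
  rw [cylL_eq_image l hl, image_eq l hl, gaussMeasure_inter_irrational,
    gaussMeasure_Ioo h0 (min_le_max) h1, ratio_eq l hl]

end CFComp

theorem gauss_measure_comparison_lemma
    (n : ℕ) (hn : 1 ≤ n) (x y : Fin n → ℕ)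
    (hx : ∀ i, 1 ≤ x i) (hy : ∀ i, 1 ≤ y i) (hxy : ∀ i, y i ≤ x i) :
    gaussMeasure (cylinder n x) ≤ gaussMeasure (cylinder n y) := by
  have hlx : ∀ z ∈ List.ofFn x, 1 ≤ z := by
    intro z hz
    rw [List.mem_ofFn] at hz
    obtain ⟨i, rfl⟩ := hz
    exact hx i
  have hly : ∀ z ∈ List.ofFn y, 1 ≤ z := by
    intro z hz
    rw [List.mem_ofFn] at hz
    obtain ⟨i, rfl⟩ := hz
    exact hy i
  have hF : List.Forall₂ (· ≤ ·) (List.ofFn y) (List.ofFn x) := by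
    rw [List.forall₂_iff_get]
    refine ⟨by simp, fun i h₁ h₂ => ?_⟩
    simp only [List.get_eq_getElem, List.getElem_ofFn]
    exact hxy _
  have hE : CFComp.Eval (List.ofFn y) ≤ CFComp.Eval (List.ofFn x) :=
    CFComp.Eval_mono _ _ hF
  have hE1 : 1 ≤ CFComp.Eval (List.ofFn y) := CFComp.one_le_Eval _ hly
  rw [CFComp.cylinder_eq n x, CFComp.cylinder_eq n y,
    CFComp.gaussMeasure_cylL _ hlx, CFComp.gaussMeasure_cylL _ hly]
  apply ENNReal.ofReal_le_ofReal
  have hEy0 : (0:ℝ) < (CFComp.Eval (List.ofFn y) : ℝ) := by exact_mod_cast hE1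
  have hEx0 : (0:ℝ) < (CFComp.Eval (List.ofFn x) : ℝ) := by
    exact_mod_cast lt_of_lt_of_le hE1 hE
  have hinv : 1 / (CFComp.Eval (List.ofFn x) : ℝ) ≤ 1 / (CFComp.Eval (List.ofFn y) : ℝ) := by
    apply one_div_le_one_div_of_le hEy0
    exact_mod_cast hE
  have hlog : Real.log (1 + 1 / (CFComp.Eval (List.ofFn x) : ℝ))
      ≤ Real.log (1 + 1 / (CFComp.Eval (List.ofFn y) : ℝ)) := by
    apply Real.log_le_log (by positivity)
    linarith
  have hlog2 : (0:ℝ) < Real.log 2 := Real.log_pos one_lt_two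
  exact div_le_div_of_nonneg_right hlog hlog2.le
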